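/- For all x with 0 < x < π, we have x > sin(x) + 10·(4·sin(x/2)² − sin(x)²) / (12·sin(x/2) + 9·sin(x) + 8·(2·sin(x/2) − sin(x))²/(12·sin(x/2) + 9·sin(x))). -/

import Mathlib

open Real Set

/-- helper: if `f 0 = 0` and `f` has nonnegative derivative on `(0,∞)`, then `f x ≥ 0` for `x ≥ 0`. -/
lemma huy_ladder_aux {f f' : ℝ → ℝ} (hd : ∀ y, HasDerivAt f (f' y) y) (h0 : f 0 = 0)
    (hpos : ∀ y, 0 < y → 0 ≤ f' y) {x : ℝ} (hx : 0 ≤ x) : 0 ≤ f x := by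
  have hmono : MonotoneOn f (Set.Ici 0) := by
    apply monotoneOn_of_deriv_nonneg (convex_Ici 0)
    · exact fun y _ => (hd y).differentiableAt.continuousAt.continuousWithinAt
    · exact fun y _ => (hd y).differentiableAt.differentiableWithinAt
    · intro y hy
      rw [interior_Ici] at hy
      rw [(hd y).deriv]
      exact hpos y hy
  have := hmono (by simp : (0:ℝ) ∈ Set.Ici 0) (by simpa using hx) hx
  simpa [h0] using this

lemma huy_sin_lb3 {x : ℝ} (hx : 0 ≤ x) : x - x^3/6 ≤ Real.sin x := by
  have hd : ∀ y : ℝ, HasDerivAt (fun t => Real.sin t - t + t^3/6)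
      (Real.cos y - 1 + y^2/2) y := by
    intro y
    have h := (((Real.hasDerivAt_sin y).sub (hasDerivAt_id y)).add
      ((hasDerivAt_pow 3 y).div_const 6))
    refine h.congr_deriv ?_
    simp
    ring
  have := huy_ladder_aux hd (by norm_num) (fun y hy => by
    nlinarith [Real.one_sub_sq_div_two_le_cos (x := y)]) hx
  linarith

lemma huy_cos_ub4 {x : ℝ} (hx : 0 ≤ x) : Real.cos x ≤ 1 - x^2/2 + x^4/24 := by
  have hd : ∀ y : ℝ, HasDerivAt (fun t => 1 - t^2/2 + t^4/24 - Real.cos t)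
      (-y + y^3/6 + Real.sin y) y := by
    intro y
    have h := (((hasDerivAt_const y (1:ℝ)).sub ((hasDerivAt_pow 2 y).div_const 2)).add
      ((hasDerivAt_pow 4 y).div_const 24)).sub (Real.hasDerivAt_cos y)
    refine h.congr_deriv ?_
    simp
    ring
  have := huy_ladder_aux hd (by norm_num) (fun y hy => by
    nlinarith [huy_sin_lb3 hy.le]) hx
  linarith

lemma huy_sin_ub5 {x : ℝ} (hx : 0 ≤ x) : Real.sin x ≤ x - x^3/6 + x^5/120 := by
  have hd : ∀ y : ℝ, HasDerivAt (fun t => t - t^3/6 + t^5/120 - Real.sin t)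
      (1 - y^2/2 + y^4/24 - Real.cos y) y := by
    intro y
    have h := (((hasDerivAt_id y).sub ((hasDerivAt_pow 3 y).div_const 6)).add
      ((hasDerivAt_pow 5 y).div_const 120)).sub (Real.hasDerivAt_sin y)
    refine h.congr_deriv ?_
    simp
    ring
  have := huy_ladder_aux hd (by norm_num) (fun y hy => by
    nlinarith [huy_cos_ub4 hy.le]) hx
  linarith

lemma huy_cos_lb6 {x : ℝ} (hx : 0 ≤ x) : 1 - x^2/2 + x^4/24 - x^6/720 ≤ Real.cos x := by
  have hd : ∀ y : ℝ, HasDerivAt (fun t => Real.cos t - 1 + t^2/2 - t^4/24 + t^6/720)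
      (-Real.sin y + y - y^3/6 + y^5/120) y := by
    intro y
    have h := ((((Real.hasDerivAt_cos y).sub (hasDerivAt_const y (1:ℝ))).add
      ((hasDerivAt_pow 2 y).div_const 2)).sub ((hasDerivAt_pow 4 y).div_const 24)).add
      ((hasDerivAt_pow 6 y).div_const 720)
    refine h.congr_deriv ?_
    simp
    ring
  have := huy_ladder_aux hd (by norm_num) (fun y hy => by
    nlinarith [huy_sin_ub5 hy.le]) hx
  linarith

lemma huy_sin_lb7 {x : ℝ} (hx : 0 ≤ x) : x - x^3/6 + x^5/120 - x^7/5040 ≤ Real.sin x := by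
  have hd : ∀ y : ℝ, HasDerivAt (fun t => Real.sin t - t + t^3/6 - t^5/120 + t^7/5040)
      (Real.cos y - 1 + y^2/2 - y^4/24 + y^6/720) y := by
    intro y
    have h := ((((Real.hasDerivAt_sin y).sub (hasDerivAt_id y)).add
      ((hasDerivAt_pow 3 y).div_const 6)).sub ((hasDerivAt_pow 5 y).div_const 120)).add
      ((hasDerivAt_pow 7 y).div_const 5040)
    refine h.congr_deriv ?_
    simp
    ring
  have := huy_ladder_aux hd (by norm_num) (fun y hy => by
    nlinarith [huy_cos_lb6 hy.le]) hx
  linarith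

lemma huy_cos_ub8 {x : ℝ} (hx : 0 ≤ x) :
    Real.cos x ≤ 1 - x^2/2 + x^4/24 - x^6/720 + x^8/40320 := by
  have hd : ∀ y : ℝ, HasDerivAt
      (fun t => 1 - t^2/2 + t^4/24 - t^6/720 + t^8/40320 - Real.cos t)
      (-y + y^3/6 - y^5/120 + y^7/5040 + Real.sin y) y := by
    intro y
    have h := (((((hasDerivAt_const y (1:ℝ)).sub ((hasDerivAt_pow 2 y).div_const 2)).add
      ((hasDerivAt_pow 4 y).div_const 24)).sub ((hasDerivAt_pow 6 y).div_const 720)).add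
      ((hasDerivAt_pow 8 y).div_const 40320)).sub (Real.hasDerivAt_cos y)
    refine h.congr_deriv ?_
    simp
    ring
  have := huy_ladder_aux hd (by norm_num) (fun y hy => by
    nlinarith [huy_sin_lb7 hy.le]) hx
  linarith

lemma huy_sin_ub9 {x : ℝ} (hx : 0 ≤ x) :
    Real.sin x ≤ x - x^3/6 + x^5/120 - x^7/5040 + x^9/362880 := by
  have hd : ∀ y : ℝ, HasDerivAt
      (fun t => t - t^3/6 + t^5/120 - t^7/5040 + t^9/362880 - Real.sin t)
      (1 - y^2/2 + y^4/24 - y^6/720 + y^8/40320 - Real.cos y) y := by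
    intro y
    have h := (((((hasDerivAt_id y).sub ((hasDerivAt_pow 3 y).div_const 6)).add
      ((hasDerivAt_pow 5 y).div_const 120)).sub ((hasDerivAt_pow 7 y).div_const 5040)).add
      ((hasDerivAt_pow 9 y).div_const 362880)).sub (Real.hasDerivAt_sin y)
    refine h.congr_deriv ?_
    simp
    ring
  have := huy_ladder_aux hd (by norm_num) (fun y hy => by
    nlinarith [huy_cos_ub8 hy.le]) hx
  linarith


/-- positivity of the residual polynomial `K(u)` on `[0, 2.4675]`. -/
lemma huy_K_pos {u : ℝ} (hu0 : 0 ≤ u) (hu : u ≤ 2.4675) :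
    0 < 29/42 - 3223/20160*u + 1867/120960*u^2 - 271/453600*u^3 - 1621/101606400*u^4
      + 20143/6096384000*u^5 - 9221/43893964800*u^6 + 5723/658409472000*u^7
      - 24193/92177326080000*u^8 + 2197/368709304320000*u^9 - 2689/26547069911040000*u^10
      + 11/8849023303680000*u^11 - 1/99109061001216000*u^12
      + 1/23786174640291840000*u^13 := by
  have h2 : u^2 ≤ 6.0886 := by nlinarith
  have h4 : u^4 ≤ 37.072 := by nlinarith [h2, sq_nonneg u, sq_nonneg (u^2)]
  have h6 : u^6 ≤ 225.8 := by nlinarith [h2, h4, sq_nonneg (u^2), pow_nonneg hu0 4]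
  have h8 : u^8 ≤ 1375 := by nlinarith [h2, h6, pow_nonneg hu0 6, sq_nonneg (u^2)]
  have h10 : u^10 ≤ 8372 := by nlinarith [h2, h8, pow_nonneg hu0 8, sq_nonneg (u^2)]
  have hq2 : 0 ≤ u^2 := sq_nonneg u
  have hp3 : u^3 ≤ 2.4675*u^2 := by nlinarith [hq2, hu]
  have hp4 : u^4 ≤ 6.0886*u^2 := mul_le_mul_of_nonneg_right h2 hq2 |>.trans_eq (by ring) |>.trans_eq' (by ring)
  have hp6 : u^6 ≤ 37.072*u^2 := (mul_le_mul_of_nonneg_right h4 hq2).trans_eq (by ring) |>.trans_eq' (by ring)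
  have hp8 : u^8 ≤ 225.8*u^2 := (mul_le_mul_of_nonneg_right h6 hq2).trans_eq (by ring) |>.trans_eq' (by ring)
  have hp10 : u^10 ≤ 1375*u^2 := (mul_le_mul_of_nonneg_right h8 hq2).trans_eq (by ring) |>.trans_eq' (by ring)
  have hp12 : u^12 ≤ 8372*u^2 := (mul_le_mul_of_nonneg_right h10 hq2).trans_eq (by ring) |>.trans_eq' (by ring)
  have hq5 : 0 ≤ u^5 := pow_nonneg hu0 5
  have hq7 : 0 ≤ u^7 := pow_nonneg hu0 7
  have hq9 : 0 ≤ u^9 := pow_nonneg hu0 9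
  have hq11 : 0 ≤ u^11 := pow_nonneg hu0 11
  have hq13 : 0 ≤ u^13 := pow_nonneg hu0 13
  linarith [hp3, hp4, hp6, hp8, hp10, hp12, hq2, hq5, hq7, hq9, hq11, hq13, hu, hu0]

/-- monotonicity of `P` -/
lemma huy_P_mono {t c cl : ℝ} (ht : 0 ≤ t) (h : cl ≤ c) (hcl : -1 ≤ cl) (hc : 0 ≤ c) :
    t * (44 + 92*cl + 89*cl^2) ≤ t * (44 + 92*c + 89*c^2) := by
  have hsum : 0 ≤ 92 + 89*(c + cl) := by linarith
  nlinarith [mul_nonneg (mul_nonneg ht (sub_nonneg.2 h)) hsum]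

/-- monotonicity of `s * R` -/
lemma huy_R_mono {s su c cu : ℝ} (hs : 0 ≤ s) (hssu : s ≤ su) (hc : 0 ≤ c) (hccu : c ≤ cu)
    (hcu : cu ≤ 1) :
    s * (60 + 134*c + 32*c^2 - c^3) ≤ su * (60 + 134*cu + 32*cu^2 - cu^3) := by
  have hc1 : c ≤ 1 := le_trans hccu hcu
  have hcu0 : 0 ≤ cu := le_trans hc hccu
  have hbr : 0 ≤ 134 + 32*(c + cu) - (c^2 + c*cu + cu^2) := by nlinarith
  have hRmono : 60 + 134*c + 32*c^2 - c^3 ≤ 60 + 134*cu + 32*cu^2 - cu^3 := by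
    nlinarith [mul_nonneg (sub_nonneg.2 hccu) hbr]
  have hRpos : 0 ≤ 60 + 134*c + 32*c^2 - c^3 := by nlinarith
  calc s * (60 + 134*c + 32*c^2 - c^3) ≤ s * (60 + 134*cu + 32*cu^2 - cu^3) := by nlinarith
    _ ≤ su * (60 + 134*cu + 32*cu^2 - cu^3) := by nlinarith

set_option maxHeartbeats 1600000 in
/-- The key inequality: `sin t * R(cos t) < t * P(cos t)` on `(0, pi/2)`. -/
lemma huy_key {t : ℝ} (h0 : 0 < t) (h1 : t < Real.pi/2) :
    Real.sin t * (60 + 134*Real.cos t + 32*Real.cos t^2 - Real.cos t^3) <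
      t * (44 + 92*Real.cos t + 89*Real.cos t^2) := by
  have hpi : Real.pi < 3.1416 := by linarith [Real.pi_lt_d6]
  have ht : t < 1.5708 := by linarith
  have hu : t^2 ≤ 2.4675 := by nlinarith
  have hs0 : 0 < Real.sin t := Real.sin_pos_of_pos_of_lt_pi h0 (by linarith [Real.pi_pos])
  have hc0 : 0 < Real.cos t := Real.cos_pos_of_mem_Ioo ⟨by linarith [Real.pi_pos], h1⟩
  have hc1 : Real.cos t ≤ 1 := Real.cos_le_one t
  have hcl : 1 - t^2/2 + t^4/24 - t^6/720 ≤ Real.cos t := huy_cos_lb6 h0.le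
  have hcu : Real.cos t ≤ 1 - t^2/2 + t^4/24 - t^6/720 + t^8/40320 := huy_cos_ub8 h0.le
  have hsu : Real.sin t ≤ t - t^3/6 + t^5/120 - t^7/5040 + t^9/362880 := huy_sin_ub9 h0.le
  have hcu1 : 1 - t^2/2 + t^4/24 - t^6/720 + t^8/40320 ≤ 1 := by
    nlinarith [pow_nonneg h0.le 2, pow_nonneg h0.le 4, pow_nonneg h0.le 8, sq_nonneg (t^2),
      sq_nonneg (t^3), sq_nonneg (t^4)]
  have hclm1 : (-1 : ℝ) ≤ 1 - t^2/2 + t^4/24 - t^6/720 := by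
    nlinarith [pow_nonneg h0.le 4, sq_nonneg (t^2), sq_nonneg t]
  have h1' : t * (44 + 92*(1 - t^2/2 + t^4/24 - t^6/720) + 89*(1 - t^2/2 + t^4/24 - t^6/720)^2)
      ≤ t * (44 + 92*Real.cos t + 89*Real.cos t^2) :=
    huy_P_mono h0.le hcl hclm1 hc0.le
  have h2' : Real.sin t * (60 + 134*Real.cos t + 32*Real.cos t^2 - Real.cos t^3)
      ≤ (t - t^3/6 + t^5/120 - t^7/5040 + t^9/362880) *
        (60 + 134*(1 - t^2/2 + t^4/24 - t^6/720 + t^8/40320)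
          + 32*(1 - t^2/2 + t^4/24 - t^6/720 + t^8/40320)^2
          - (1 - t^2/2 + t^4/24 - t^6/720 + t^8/40320)^3) :=
    huy_R_mono hs0.le hsu hc0.le hcu hcu1
  have hK := huy_K_pos (u := t^2) (by positivity) hu
  have hprod := mul_pos (pow_pos h0 7) hK
  have hGid : t * (44 + 92*(1 - t^2/2 + t^4/24 - t^6/720) + 89*(1 - t^2/2 + t^4/24 - t^6/720)^2)
      - (t - t^3/6 + t^5/120 - t^7/5040 + t^9/362880) *
        (60 + 134*(1 - t^2/2 + t^4/24 - t^6/720 + t^8/40320)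
          + 32*(1 - t^2/2 + t^4/24 - t^6/720 + t^8/40320)^2
          - (1 - t^2/2 + t^4/24 - t^6/720 + t^8/40320)^3)
      = t^7 * (29/42 - 3223/20160*t^2 + 1867/120960*(t^2)^2 - 271/453600*(t^2)^3
        - 1621/101606400*(t^2)^4 + 20143/6096384000*(t^2)^5 - 9221/43893964800*(t^2)^6
        + 5723/658409472000*(t^2)^7 - 24193/92177326080000*(t^2)^8
        + 2197/368709304320000*(t^2)^9 - 2689/26547069911040000*(t^2)^10
        + 11/8849023303680000*(t^2)^11 - 1/99109061001216000*(t^2)^12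
        + 1/23786174640291840000*(t^2)^13) := by
    ring
  linarith [h1', h2', hprod, hGid]

theorem huygens_lower_barycentric (x : ℝ) (h0 : 0 < x) (h1 : x < Real.pi) :
    x > Real.sin x +
      10 * (4 * Real.sin (x / 2) ^ 2 - Real.sin x ^ 2) /
        (12 * Real.sin (x / 2) + 9 * Real.sin x +
          8 * (2 * Real.sin (x / 2) - Real.sin x) ^ 2 /
            (12 * Real.sin (x / 2) + 9 * Real.sin x)) := by
  have hsin2 : Real.sin x = 2 * Real.sin (x/2) * Real.cos (x/2) := by
    rw [show x = 2 * (x/2) by ring, Real.sin_two_mul]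
    norm_num
  set s := Real.sin (x/2) with hs
  set c := Real.cos (x/2) with hc
  have ht0 : 0 < x/2 := by linarith
  have ht1 : x/2 < Real.pi/2 := by linarith
  have hs0 : 0 < s := Real.sin_pos_of_pos_of_lt_pi ht0 (by linarith [Real.pi_pos])
  have hc0 : 0 < c := Real.cos_pos_of_mem_Ioo ⟨by linarith [Real.pi_pos], ht1⟩
  have key := huy_key ht0 ht1
  rw [hsin2]
  have hD1 : (0:ℝ) < 12*s + 9*(2*s*c) := by nlinarith
  have h23 : (0:ℝ) < 3*(2 + 3*c) := by linarith
  have hP : (0:ℝ) < 44 + 92*c + 89*c^2 := by nlinarith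
  have hDval : 12*s + 9*(2*s*c) + 8*(2*s - 2*s*c)^2/(12*s + 9*(2*s*c))
      = 2*s*(44 + 92*c + 89*c^2)/(3*(2 + 3*c)) := by
    field_simp
    ring
  rw [hDval]
  have hfrac : 10 * (4*s^2 - (2*s*c)^2) / (2*s*(44 + 92*c + 89*c^2)/(3*(2 + 3*c)))
      = 10 * (4*s^2 - (2*s*c)^2) * (3*(2+3*c)) / (2*s*(44 + 92*c + 89*c^2)) := by
    rw [div_div_eq_mul_div]
  rw [hfrac]
  have hlt : 10 * (4*s^2 - (2*s*c)^2) * (3*(2+3*c)) / (2*s*(44 + 92*c + 89*c^2))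
      < x - 2*s*c := by
    rw [div_lt_iff₀ (by positivity)]
    nlinarith [mul_pos hs0 (sub_pos.2 key)]
  linarith
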